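/- Let {f_k} be a frame for a Hilbert space H. Then {f_k} is a tight frame if and only if it admits a dual frame of the form {C f_k} for some constant C > 0. -/

import Mathlib

open scoped InnerProductSpace

/-- A frame `{f_k}` in a Hilbert space is tight iff it admits a dual
frame of the form `{C f_k}` for some constant `C > 0`. -/
theorem tight_iff_dual_multiple {H : Type*} [NormedAddCommGroup H] [InnerProductSpace ℂ H]
    [CompleteSpace H] {ι : Type*} (f : ι → H)
    (hframe : ∃ A B : ℝ, 0 < A ∧ 0 < B ∧ ∀ x : H,
      A * ‖x‖ ^ 2 ≤ ∑' i, ‖⟪f i, x⟫_ℂ‖ ^ 2 ∧ ∑' i, ‖⟪f i, x⟫_ℂ‖ ^ 2 ≤ B * ‖x‖ ^ 2) :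
    (∃ A : ℝ, 0 < A ∧ ∀ x : H, ∑' i, ‖⟪f i, x⟫_ℂ‖ ^ 2 = A * ‖x‖ ^ 2) ↔
      (∃ C : ℝ, 0 < C ∧ ∀ x : H, HasSum (fun i => ⟪f i, x⟫_ℂ • (C • f i)) x) := by
  classical
  constructor
  · rintro ⟨A, hA, htight⟩
    haveI : Fact (1 ≤ (2 : ENNReal)) := ⟨one_le_two⟩
    set r : ℝ := (Real.sqrt A)⁻¹ with hr
    have hrsq : r ^ 2 = A⁻¹ := by
      rw [hr, inv_pow, Real.sq_sqrt hA.le]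
    have htwo : ((2 : ENNReal).toReal) = 2 := by norm_num
    -- summability of the frame coefficients
    have hsum : ∀ x : H, Summable (fun i => ‖⟪f i, x⟫_ℂ‖ ^ 2) := by
      intro x
      by_contra h
      have h0 := tsum_eq_zero_of_not_summable h
      rw [htight x] at h0
      have hx : x = 0 := by
        have hsq : ‖x‖ ^ 2 = 0 := (mul_eq_zero.mp h0).resolve_left (ne_of_gt hA)
        have hnx : ‖x‖ = 0 := by
          simpa using pow_eq_zero_iff (two_ne_zero (α := ℕ)) |>.mp hsq
        simpa using hnx
      apply h
      simp [hx]
    have hmem : ∀ x : H, Memℓp (fun i => (r : ℂ) * ⟪f i, x⟫_ℂ) 2 := by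
      intro x
      apply memℓp_gen
      have hs : Summable (fun i => (r ^ 2) * ‖⟪f i, x⟫_ℂ‖ ^ 2) := (hsum x).mul_left _
      have : (fun i => ‖(r : ℂ) * ⟪f i, x⟫_ℂ‖ ^ (2 : ENNReal).toReal)
          = fun i => (r ^ 2) * ‖⟪f i, x⟫_ℂ‖ ^ 2 := by
        funext i
        rw [htwo]
        rw [show ((2 : ℝ) = ((2 : ℕ) : ℝ)) by norm_num, Real.rpow_natCast]
        simp [norm_mul, mul_pow, Complex.sq_norm]
      rw [this]
      exact hs
    -- the analysis operator as a linear isometry into ℓ²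
    let T : H →ₗᵢ[ℂ] lp (fun _ : ι => ℂ) 2 :=
      { toFun := fun x => ⟨fun i => (r : ℂ) * ⟪f i, x⟫_ℂ, hmem x⟩
        map_add' := fun x y => by
          apply lp.ext
          funext i
          simp [inner_add_right, mul_add]
          rfl
        map_smul' := fun c x => by
          apply lp.ext
          funext i
          simp [inner_smul_right]
          ring
        norm_map' := fun x => by
          have h2 : (0 : ℝ) < (2 : ENNReal).toReal := by norm_num
          have hn := lp.norm_rpow_eq_tsum h2
            (⟨fun i => (r : ℂ) * ⟪f i, x⟫_ℂ, hmem x⟩ : lp (fun _ : ι => ℂ) 2)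
          have hre : (fun i => ‖(r : ℂ) * ⟪f i, x⟫_ℂ‖ ^ (2 : ENNReal).toReal)
              = fun i => (r ^ 2) * ‖⟪f i, x⟫_ℂ‖ ^ 2 := by
            funext i
            rw [htwo, show ((2 : ℝ) = ((2 : ℕ) : ℝ)) by norm_num, Real.rpow_natCast]
            simp [norm_mul, mul_pow, Complex.sq_norm]
          rw [hre, tsum_mul_left, htight x, htwo] at hn
          rw [show ((2 : ℝ) = ((2 : ℕ) : ℝ)) by norm_num, Real.rpow_natCast] at hn
          have hsq : ‖(⟨fun i => (r : ℂ) * ⟪f i, x⟫_ℂ, hmem x⟩ : lp (fun _ : ι => ℂ) 2)‖ ^ 2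
              = ‖x‖ ^ 2 := by
            rw [hn, hrsq]
            field_simp
          have := congrArg Real.sqrt hsq
          simpa [Real.sqrt_sq, norm_nonneg] using this }
    let T' : H →L[ℂ] lp (fun _ : ι => ℂ) 2 := T.toContinuousLinearMap
    let S : lp (fun _ : ι => ℂ) 2 →L[ℂ] H := ContinuousLinearMap.adjoint T'
    have hST : ∀ x : H, S (T' x) = x := by
      intro x
      refine ext_inner_left ℂ fun v => ?_
      rw [ContinuousLinearMap.adjoint_inner_right]
      exact T.inner_map_map v x
    have hsingle : ∀ (i : ι) (a : ℂ), S (lp.single 2 i a) = ((r : ℂ) * a) • f i := by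
      intro i a
      refine ext_inner_right ℂ fun v => ?_
      rw [ContinuousLinearMap.adjoint_inner_left, lp.inner_single_left, inner_smul_left]
      have hv : (T' v : ∀ _ : ι, ℂ) i = (r : ℂ) * ⟪f i, v⟫_ℂ := rfl
      rw [hv, RCLike.inner_apply]
      simp [map_mul, Complex.conj_ofReal]
      ring
    refine ⟨A⁻¹, inv_pos.mpr hA, fun x => ?_⟩
    have h1 : HasSum (fun i : ι => lp.single 2 i ((r : ℂ) * ⟪f i, x⟫_ℂ)) (T' x) := by
      have h := lp.hasSum_single (E := fun _ : ι => ℂ) ENNReal.ofNat_ne_top (T' x)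
      exact h
    have h2 := h1.mapL S
    rw [hST x] at h2
    have h3 : (fun i => S (lp.single 2 i ((r : ℂ) * ⟪f i, x⟫_ℂ)))
        = fun i => ⟪f i, x⟫_ℂ • (A⁻¹ • f i) := by
      funext i
      rw [hsingle]
      rw [RCLike.real_smul_eq_coe_smul (K := ℂ) A⁻¹ (f i), smul_smul, ← mul_assoc,
        ← Complex.ofReal_mul, ← sq, hrsq]
      exact congrArg (· • f i) (mul_comm _ _)
    rwa [h3] at h2
  · rintro ⟨C, hC, hd⟩
    refine ⟨C⁻¹, inv_pos.mpr hC, fun x => ?_⟩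
    have h1 : HasSum (fun i => ⟪x, ⟪f i, x⟫_ℂ • (C • f i)⟫_ℂ) ⟪x, x⟫_ℂ :=
      (hd x).mapL (innerSL ℂ x)
    have h2 : (fun i => ⟪x, ⟪f i, x⟫_ℂ • (C • f i)⟫_ℂ)
        = fun i => ((C * ‖⟪f i, x⟫_ℂ‖ ^ 2 : ℝ) : ℂ) := by
      funext i
      rw [RCLike.real_smul_eq_coe_smul (K := ℂ) C (f i), inner_smul_right, inner_smul_right,
        ← inner_conj_symm x (f i), mul_left_comm, RCLike.mul_conj]
      norm_cast
    rw [h2] at h1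
    have hxx : ⟪x, x⟫_ℂ = ((‖x‖ ^ 2 : ℝ) : ℂ) := by
      rw [inner_self_eq_norm_sq_to_K (𝕜 := ℂ) x]
      norm_cast
    rw [hxx] at h1
    have h3 : HasSum (fun i => C * ‖⟪f i, x⟫_ℂ‖ ^ 2) (‖x‖ ^ 2) :=
      Complex.hasSum_ofReal.mp h1
    have h4 := h3.mul_left C⁻¹
    have h5 : (fun i => C⁻¹ * (C * ‖⟪f i, x⟫_ℂ‖ ^ 2)) = fun i => ‖⟪f i, x⟫_ℂ‖ ^ 2 := by
      funext i
      field_simp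
    rw [h5] at h4
    rw [h4.tsum_eq]
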